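/- Let N be a finitely generated module over a Noetherian ring R, and p ∈ Supp(N). Then there exists a nonzero R-module homomorphism f : N → R/p, and the image of f equals b/p for some ideal b of R with b strictly containing p. -/

import Mathlib

open CategoryTheory Limits Opposite

universe u

noncomputable section

variable (R : Type u) [CommRing R]

/-- A Serre subcategory of the category of `R`-modules, described as a predicate on
`ModuleCat R` closed under isomorphisms, submodules, quotients and extensions. -/
structure SerreClass : Type (u + 1) where
  mem : ModuleCat.{u} R → Prop
  mem_of_iso : ∀ {X Y : ModuleCat.{u} R}, (X ≅ Y) → mem X → mem Y
  mem_submodule : ∀ (X : ModuleCat.{u} R) (A : Submodule R X), mem X → mem (ModuleCat.of R A)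
  mem_quotient : ∀ (X : ModuleCat.{u} R) (A : Submodule R X), mem X →
    mem (ModuleCat.of R (X ⧸ A))
  mem_of_extension : ∀ (X : ModuleCat.{u} R) (A : Submodule R X),
    mem (ModuleCat.of R A) → mem (ModuleCat.of R (X ⧸ A)) → mem X

/-- A Melkersson subcategory: a Serre subcategory such that, for every ideal `b` and every
`b`-torsion module `X`, if `(0 :_X b)` belongs to the class then so does `X`. -/
structure MelkerssonClass extends SerreClass R where
  mem_of_torsion : ∀ (b : Ideal R) (X : ModuleCat.{u} R),
    (∀ x : X, ∃ n : ℕ, ∀ r ∈ b ^ n, r • x = 0) →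
    mem (ModuleCat.of R (Submodule.torsionBySet R X (b : Set R))) → mem X

variable (a : Ideal R) (M N : Type u) [AddCommGroup M] [Module R M]
  [AddCommGroup N] [Module R N]

/-- `M ⧸ aⁿM` as an object of `ModuleCat R`. -/
abbrev ModQuotPow (n : ℕ) : ModuleCat.{u} R :=
  ModuleCat.of R (M ⧸ (a ^ n • ⊤ : Submodule R M))

/-- The canonical projection `M ⧸ aⁿ⁺¹M → M ⧸ aⁿM`. -/
def modQuotPowHom (n : ℕ) : ModQuotPow R a M (n + 1) ⟶ ModQuotPow R a M n :=
  ModuleCat.ofHom (Submodule.mapQ _ _ LinearMap.id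
    (by
      refine le_trans (Submodule.smul_mono (Ideal.pow_le_pow_right (Nat.le_succ n)) (le_refl (⊤ : Submodule R M))) ?_
      rw [Submodule.comap_id]))

/-- The direct system `n ↦ Extⁱ(M ⧸ aⁿM, N)`. -/
def glcDiagram (i : ℕ) : ℕ ⥤ ModuleCat.{u} R :=
  Functor.ofSequence
    (X := fun n => ((Ext R (ModuleCat.{u} R) i).obj (op (ModQuotPow R a M n))).obj
      (ModuleCat.of R N))
    (fun n => ((Ext R (ModuleCat.{u} R) i).map (modQuotPowHom R a M n).op).app
      (ModuleCat.of R N))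

/-- The `i`-th generalized local cohomology module
`Hⁱ_a(M, N) = colim_n Extⁱ(M ⧸ aⁿM, N)`. -/
def glc (i : ℕ) : ModuleCat.{u} R :=
  colimit (glcDiagram R a M N i)

/-- `M` has projective dimension at most `n`: all Ext-groups `Extⁱ(M, -)` with `i > n` vanish. -/
def projDimLE (n : ℕ) : Prop :=
  ∀ i : ℕ, n < i → ∀ X : ModuleCat.{u} R,
    Subsingleton (((Ext R (ModuleCat.{u} R) i).obj (op (ModuleCat.of R M))).obj X)

/-- The Serre cohomological dimension `cd_{(a,S)}(M,N)`, an element of `WithBot ℕ∞`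
(with `sup ∅ = ⊥ = -∞`). -/
def serreCD (S : SerreClass R) : WithBot ℕ∞ :=
  sSup ((fun i : ℕ => ((i : ℕ∞) : WithBot ℕ∞)) '' {i : ℕ | ¬ S.mem (glc R a M N i)})



private lemma aux_step1 [Module.Finite R N] (p : PrimeSpectrum R)
    (hp : p ∈ Module.support R N) (d : R ⧸ p.asIdeal) (hd : d ≠ 0)
    (hnot : ∀ x : (N ⧸ (p.asIdeal • ⊤ : Submodule R N)), d • x = 0) : False := by
  haveI := p.isPrime
  have hann : Module.annihilator R N ≤ p.asIdeal :=
    Module.mem_support_iff_of_finite.mp hp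
  obtain ⟨r, rfl⟩ := Ideal.Quotient.mk_surjective d
  have hr : r ∉ p.asIdeal := fun h => hd (Ideal.Quotient.eq_zero_iff_mem.mpr h)
  have hsub : LinearMap.range (r • (LinearMap.id : N →ₗ[R] N)) ≤
      (p.asIdeal • ⊤ : Submodule R N) := by
    rintro _ ⟨n, rfl⟩
    have := hnot (Submodule.Quotient.mk n)
    rw [Module.Quotient.mk_smul_mk] at this
    simpa [LinearMap.smul_apply] using (Submodule.Quotient.mk_eq_zero _).mp this
  obtain ⟨q, hmonic, -, hcoeff, haeval⟩ :=
    LinearMap.exists_monic_and_coeff_mem_pow_and_aeval_eq_zero_of_range_le_smul R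
      (r • (LinearMap.id : N →ₗ[R] N)) p.asIdeal hsub
  have hf : (r • (LinearMap.id : N →ₗ[R] N)) = algebraMap R (Module.End R N) r := by
    rw [Module.algebraMap_end_eq_smul_id]
  rw [hf] at haeval
  rw [Polynomial.aeval_algebraMap_apply] at haeval
  have heval : q.eval r ∈ Module.annihilator R N := by
    rw [Module.mem_annihilator]
    intro n
    have : (algebraMap R (Module.End R N)) (Polynomial.aeval r q) n = 0 := by rw [haeval]; rfl
    simpa [Module.algebraMap_end_eq_smul_id, Polynomial.coe_aeval_eq_eval] using this
  have hevalp : q.eval r ∈ p.asIdeal := hann heval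
  set n := q.natDegree with hn
  have hsum : q.eval r = ∑ i ∈ Finset.range (n + 1), q.coeff i * r ^ i :=
    q.eval_eq_sum_range r
  have hpow : r ^ n ∈ p.asIdeal := by
    have h1 : q.coeff n = 1 := hmonic.coeff_natDegree
    have : r ^ n = q.eval r - ∑ i ∈ Finset.range n, q.coeff i * r ^ i := by
      rw [hsum, Finset.sum_range_succ, h1, one_mul]; ring
    rw [this]
    refine Submodule.sub_mem _ hevalp (Ideal.sum_mem _ fun i hi => ?_)
    have hin : i < n := Finset.mem_range.mp hi
    have : q.coeff i ∈ p.asIdeal ^ (n - i) := hcoeff i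
    have hle : p.asIdeal ^ (n - i) ≤ p.asIdeal :=
      Ideal.pow_le_self (Nat.sub_ne_zero_of_lt hin)
    exact Ideal.mul_mem_right _ _ (hle this)
  rcases Nat.eq_zero_or_pos n with h0 | hpos
  · rw [h0, pow_zero] at hpow
    exact p.isPrime.ne_top (Ideal.eq_top_of_isUnit_mem _ hpow isUnit_one)
  · exact hr (p.isPrime.mem_of_pow_mem n hpow)

private lemma aux_step2 (D : Type u) [CommRing D] [IsDomain D] (M₀ : Type u) [AddCommGroup M₀]
    [Module D M₀] [Module.Finite D M₀] (m : M₀) (hm : ∀ d : D, d ≠ 0 → d • m ≠ 0) :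
    ∃ g : M₀ →ₗ[D] D, g ≠ 0 := by
  classical
  set K := FractionRing D
  set M' := LocalizedModule (nonZeroDivisors D) M₀
  set μ : M₀ →ₗ[D] M' := LocalizedModule.mkLinearMap (nonZeroDivisors D) M₀
  have hv : μ m ≠ 0 := by
    intro h
    obtain ⟨s, hs⟩ := (IsLocalizedModule.eq_zero_iff (nonZeroDivisors D) μ).mp h
    exact hm s (nonZeroDivisors.ne_zero s.2) hs
  set g1 : K →ₗ[K] M' := LinearMap.toSpanSingleton K M' (μ m)
  have hker : LinearMap.ker g1 = ⊥ := by
    rw [LinearMap.ker_eq_bot]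
    intro x y hxy
    simp only [g1, LinearMap.toSpanSingleton_apply] at hxy
    have := sub_eq_zero.mpr hxy
    rw [← sub_smul] at this
    rcases smul_eq_zero.mp this with h | h
    · exact sub_eq_zero.mp h
    · exact absurd h hv
  obtain ⟨φK, hφK⟩ := g1.exists_leftInverse_of_injective hker
  have hφv : φK (μ m) = 1 := by
    have : φK (g1 1) = 1 := by rw [← LinearMap.comp_apply, hφK]; rfl
    simpa [g1, LinearMap.toSpanSingleton_apply] using this
  set φ : M₀ →ₗ[D] K := (φK.restrictScalars D).comp μ
  have hφm : φ m = 1 := hφv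
  have hfg : (LinearMap.range φ).FG := by
    rw [LinearMap.range_eq_map]
    exact Submodule.FG.map _ (Module.Finite.fg_top)
  obtain ⟨a, haS, hint⟩ := FractionalIdeal.isFractional_of_fg (S := nonZeroDivisors D)
    (P := K) hfg
  have ha : (a : D) ≠ 0 := nonZeroDivisors.ne_zero haS
  set ψ : M₀ →ₗ[D] K := a • φ
  have hinj : Function.Injective (Algebra.linearMap D K) := IsFractionRing.injective D K
  have hmem : ∀ x : M₀, ψ x ∈ LinearMap.range (Algebra.linearMap D K) := by
    intro x
    obtain ⟨c, hc⟩ := hint (φ x) ⟨x, rfl⟩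
    exact ⟨c, hc⟩
  set e := LinearEquiv.ofInjective (Algebra.linearMap D K) hinj
  set g : M₀ →ₗ[D] D := e.symm.toLinearMap.comp (ψ.codRestrict _ hmem)
  have hval : ∀ x : M₀, algebraMap D K (g x) = ψ x := by
    intro x
    have h1 : (e (e.symm (ψ.codRestrict _ hmem x)) : K) = ψ x := by
      rw [e.apply_symm_apply]; rfl
    have h2 : (e (g x) : K) = Algebra.linearMap D K (g x) :=
      LinearEquiv.ofInjective_apply (Algebra.linearMap D K) (g x)
    simpa using h2.symm.trans h1
  refine ⟨g, fun h => ?_⟩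
  have : algebraMap D K (g m) = algebraMap D K a := by
    rw [hval]; simp [ψ, hφm, Algebra.smul_def, mul_one]
  have hgm : g m = a := hinj this
  rw [h] at hgm
  exact ha (by simpa using hgm.symm)


theorem stmt18 [IsNoetherianRing R] [Module.Finite R N] (p : PrimeSpectrum R)
    (hp : p ∈ Module.support R N) :
    (∃ f : N →ₗ[R] R ⧸ p.asIdeal, f ≠ 0) ∧
    (∀ f : N →ₗ[R] R ⧸ p.asIdeal, f ≠ 0 →
      ∃ b : Ideal R, p.asIdeal < b ∧
        LinearMap.range f =
          Submodule.map (Algebra.linearMap R (R ⧸ p.asIdeal)) b) := by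
  
  constructor
  · classical
    haveI := p.isPrime
    set D := R ⧸ p.asIdeal
    set M := N ⧸ (p.asIdeal • ⊤ : Submodule R N)
    haveI : IsScalarTower R D M :=
      Module.IsTorsionBySet.isScalarTower (Module.isTorsionBySet_quotient_ideal_smul N p.asIdeal)
    haveI : Module.Finite D M := Module.Finite.of_restrictScalars_finite R D M
    have hm : ∃ m : M, ∀ d : D, d ≠ 0 → d • m ≠ 0 := by
      by_contra hc
      push_neg at hc
      obtain ⟨s, hs⟩ := Module.Finite.fg_top (R := D) (M := M)
      choose df hdf0 hdf using hc
      set d : D := ∏ x ∈ s, df x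
      have hd0 : d ≠ 0 := Finset.prod_ne_zero_iff.mpr fun x _ => hdf0 x
      refine aux_step1 R N p hp d hd0 fun x => ?_
      have hx : x ∈ Submodule.span D (s : Set M) := hs ▸ Submodule.mem_top
      induction hx using Submodule.span_induction with
      | mem y hy =>
          obtain ⟨c, hc'⟩ := Finset.dvd_prod_of_mem df hy
          rw [show d = c * df y from hc'.trans (mul_comm _ _), mul_smul, hdf y, smul_zero]
      | zero => simp
      | add y z _ _ hy hz => rw [smul_add, hy, hz, add_zero]
      | smul c y _ hy => rw [smul_comm, hy, smul_zero]
    obtain ⟨m, hm⟩ := hm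
    obtain ⟨g, hg⟩ := aux_step2 D M m hm
    set f : N →ₗ[R] D :=
      { toFun := fun n => g (Submodule.Quotient.mk n)
        map_add' := fun x y => by
          show g (Submodule.Quotient.mk (x + y)) = _
          rw [Submodule.Quotient.mk_add, map_add]
        map_smul' := fun r n => by
          show g (Submodule.Quotient.mk (r • n)) = r • g (Submodule.Quotient.mk n)
          have h1 : (Submodule.Quotient.mk (r • n) : M) =
              (Ideal.Quotient.mk p.asIdeal) r • (Submodule.Quotient.mk n : M) :=
            (Module.Quotient.mk_smul_mk (M := N) (I := p.asIdeal) r n).symm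
          rw [h1, map_smul, ← Ideal.Quotient.algebraMap_eq, algebraMap_smul] }
    refine ⟨f, fun h => hg ?_⟩
    apply LinearMap.ext
    intro x
    obtain ⟨n, rfl⟩ := Submodule.Quotient.mk_surjective _ x
    exact DFunLike.congr_fun h n
  · intro f hf
    refine ⟨Submodule.comap (Algebra.linearMap R (R ⧸ p.asIdeal)) (LinearMap.range f), ?_, ?_⟩
    · rw [lt_iff_le_and_ne]
      constructor
      · intro x hx
        simp only [Submodule.mem_comap, Algebra.linearMap_apply]
        have : algebraMap R (R ⧸ p.asIdeal) x = 0 := by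
          rw [Ideal.Quotient.algebraMap_eq, Ideal.Quotient.eq_zero_iff_mem]; exact hx
        rw [this]; exact (LinearMap.range f).zero_mem
      · intro h
        apply hf
        ext n
        have hmem : f n ∈ LinearMap.range f := ⟨n, rfl⟩
        obtain ⟨r, hr⟩ := Ideal.Quotient.mk_surjective (f n)
        have : r ∈ Submodule.comap (Algebra.linearMap R (R ⧸ p.asIdeal))
            (LinearMap.range f) := by
          simp only [Submodule.mem_comap, Algebra.linearMap_apply,
            Ideal.Quotient.algebraMap_eq, hr]
          exact hmem
        rw [← h] at this
        have : f n = 0 := by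
          rw [← hr, ← (Ideal.Quotient.eq_zero_iff_mem (I := p.asIdeal)).mpr this]
        simpa using this
    · have hsurj : LinearMap.range (Algebra.linearMap R (R ⧸ p.asIdeal)) = ⊤ :=
        LinearMap.range_eq_top.mpr fun x => Ideal.Quotient.mk_surjective x
      rw [Submodule.map_comap_eq, hsurj, top_inf_eq]
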